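/- Let T and (Tₖ) be bounded normal operators on Hilbert spaces, with spectra K = σ(T) ⊂ ℂ and Kₖ = σ(Tₖ) ⊂ ℂ. Assume Tₖ converges in *-moments to T with respect to faithful states (equivalently, the spectral measures converge weakly and have full support K, Kₖ). Then Tₖ → T strongly (i.e. ‖P(Tₖ, Tₖ*)‖ → ‖P(T, T*)‖ for all *-polynomials P) if and only if sup_{λ ∈ Kₖ} dist(λ, K) → 0 as k → ∞. -/

import Mathlib

open Filter Topology MeasureTheory



noncomputable def Qh : FreeAlgebra ℂ Bool →ₐ[ℂ] (ℂ → ℂ) :=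
  FreeAlgebra.lift ℂ (fun b : Bool => if b then (fun z => z) else (fun z => (starRingEnd ℂ) z))

lemma Qh_apply (P : FreeAlgebra ℂ Bool) (z : ℂ) :
    FreeAlgebra.lift ℂ (fun b : Bool => if b then z else (starRingEnd ℂ) z) P = Qh P z := by
  have h : FreeAlgebra.lift ℂ (fun b : Bool => if b then z else (starRingEnd ℂ) z)
      = (Pi.evalAlgHom ℂ (fun _ : ℂ => ℂ) z).comp Qh := by
    apply FreeAlgebra.hom_ext
    funext b
    cases b <;> simp [Qh]
  rw [h]; rfl

lemma Qh_true : Qh (FreeAlgebra.ι ℂ true) = fun z => z := by simp [Qh]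
lemma Qh_false : Qh (FreeAlgebra.ι ℂ false) = fun z => (starRingEnd ℂ) z := by simp [Qh]

lemma Qh_cont (P : FreeAlgebra ℂ Bool) : Continuous (Qh P) := by
  induction P using FreeAlgebra.induction with
  | grade0 r => rw [AlgHom.commutes]; exact continuous_const
  | grade1 b => cases b <;> simp [Qh_true, Qh_false] <;> first | exact continuous_id | exact continuous_star
  | mul a b ha hb => rw [map_mul]; exact ha.mul hb
  | add a b ha hb => rw [map_add]; exact ha.add hb

section cfcpart
variable {H : Type*} [NormedAddCommGroup H] [InnerProductSpace ℂ H] [CompleteSpace H]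

lemma lift_eq_cfc (T : H →L[ℂ] H) (hT : IsStarNormal T) (P : FreeAlgebra ℂ Bool) :
    FreeAlgebra.lift ℂ (fun b : Bool => if b then T else ContinuousLinearMap.adjoint T) P
      = cfc (Qh P) T := by
  induction P using FreeAlgebra.induction with
  | grade0 r =>
    rw [AlgHom.commutes, AlgHom.commutes,
      show (algebraMap ℂ (ℂ → ℂ)) r = fun _ : ℂ => r from rfl, cfc_const r T hT]
  | grade1 b =>
    cases b
    · rw [FreeAlgebra.lift_ι_apply, if_neg (by simp),
        show (Qh (FreeAlgebra.ι ℂ false)) = fun z : ℂ => star (id z) by simp [Qh],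
        cfc_star, cfc_id ℂ T hT, ContinuousLinearMap.star_eq_adjoint]
    · rw [FreeAlgebra.lift_ι_apply, if_pos rfl,
        show (Qh (FreeAlgebra.ι ℂ true)) = fun z : ℂ => z by simp [Qh], cfc_id' ℂ T hT]
  | mul a b ha hb =>
    rw [map_mul, map_mul, ha, hb]
    exact (cfc_mul _ _ T (Qh_cont a).continuousOn (Qh_cont b).continuousOn).symm
  | add a b ha hb =>
    rw [map_add, map_add, ha, hb]
    exact (cfc_add T _ _ (Qh_cont a).continuousOn (Qh_cont b).continuousOn).symm

lemma norm_lift_eq [Nontrivial H] (T : H →L[ℂ] H) (hT : IsStarNormal T) (P : FreeAlgebra ℂ Bool) :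
    ‖FreeAlgebra.lift ℂ (fun b : Bool => if b then T else ContinuousLinearMap.adjoint T) P‖
      = sSup ((fun z => ‖Qh P z‖) '' spectrum ℂ T) := by
  rw [lift_eq_cfc T hT P]
  exact (IsGreatest.norm_cfc (Qh P) T (Qh_cont P).continuousOn hT).csSup_eq.symm

end cfcpart

lemma qh_approx (R : ℝ) (f : ℂ → ℂ) (hf : Continuous f) {ε : ℝ} (hε : 0 < ε) :
    ∃ P : FreeAlgebra ℂ Bool, ∀ z ∈ Metric.closedBall (0:ℂ) R, ‖f z - Qh P z‖ ≤ ε := by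
  set D : Set ℂ := Metric.closedBall (0:ℂ) R with hD
  haveI : CompactSpace D := isCompact_iff_compactSpace.mp (isCompact_closedBall _ _)
  suffices h : ∀ g : C(D, ℂ), ∀ ε : ℝ, 0 < ε → ∃ P : FreeAlgebra ℂ Bool,
      ∀ z : D, ‖g z - Qh P (z : ℂ)‖ ≤ ε by
    obtain ⟨P, hP⟩ := h (ContinuousMap.restrict D ⟨f, hf⟩) ε hε
    exact ⟨P, fun z hz => hP ⟨z, hz⟩⟩
  intro g
  induction g using ContinuousMap.induction_on_of_compact with
  | const r =>
    intro ε hε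
    refine ⟨algebraMap ℂ _ r, fun z => ?_⟩
    rw [AlgHom.commutes]
    simpa using hε.le
  | id =>
    intro ε hε
    refine ⟨FreeAlgebra.ι ℂ true, fun z => ?_⟩
    rw [show Qh (FreeAlgebra.ι ℂ true) = fun z : ℂ => z by simp [Qh]]
    simpa using hε.le
  | star_id =>
    intro ε hε
    refine ⟨FreeAlgebra.ι ℂ false, fun z => ?_⟩
    rw [show Qh (FreeAlgebra.ι ℂ false) = fun z : ℂ => (starRingEnd ℂ) z by simp [Qh]]
    simpa using hε.le
  | add f g hf' hg' =>
    intro ε hε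
    obtain ⟨P1, hP1⟩ := hf' (ε/2) (by positivity)
    obtain ⟨P2, hP2⟩ := hg' (ε/2) (by positivity)
    refine ⟨P1 + P2, fun z => ?_⟩
    rw [map_add]
    calc ‖(f z + g z) - (Qh P1 z + Qh P2 z)‖
        = ‖(f z - Qh P1 z) + (g z - Qh P2 z)‖ := by ring_nf
      _ ≤ ‖f z - Qh P1 z‖ + ‖g z - Qh P2 z‖ := norm_add_le _ _
      _ ≤ ε/2 + ε/2 := add_le_add (hP1 z) (hP2 z)
      _ = ε := by ring
  | mul f g hf' hg' =>
    intro ε hε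
    set δ : ℝ := min 1 (ε / (‖f‖ + ‖g‖ + 2)) with hδdef
    have hδpos : 0 < δ := lt_min one_pos (by positivity)
    have hδ1 : δ ≤ 1 := min_le_left _ _
    have hδ2 : δ ≤ ε / (‖f‖ + ‖g‖ + 2) := min_le_right _ _
    obtain ⟨P1, hP1⟩ := hf' δ hδpos
    obtain ⟨P2, hP2⟩ := hg' δ hδpos
    refine ⟨P1 * P2, fun z => ?_⟩
    rw [map_mul]
    have key : f z * g z - Qh P1 z * Qh P2 z
        = f z * (g z - Qh P2 z) + (f z - Qh P1 z) * Qh P2 z := by ring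
    have h2 : ‖Qh P2 (z:ℂ)‖ ≤ ‖g‖ + 1 := by
      calc ‖Qh P2 (z:ℂ)‖ ≤ ‖g z‖ + ‖g z - Qh P2 z‖ := by
            have := norm_sub_norm_le (g z - Qh P2 z) (g z)
            have h3 := norm_add_le (g z - Qh P2 (z:ℂ)) (Qh P2 (z:ℂ) - g z + g z)
            calc ‖Qh P2 (z:ℂ)‖ = ‖g z + (Qh P2 (z:ℂ) - g z)‖ := by ring_nf
              _ ≤ ‖g z‖ + ‖Qh P2 (z:ℂ) - g z‖ := norm_add_le _ _
              _ = ‖g z‖ + ‖g z - Qh P2 (z:ℂ)‖ := by rw [norm_sub_rev]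
        _ ≤ ‖g‖ + 1 := add_le_add (g.norm_coe_le_norm z) ((hP2 z).trans hδ1)
    calc ‖f z * g z - Qh P1 z * Qh P2 z‖
        ≤ ‖f z‖ * ‖g z - Qh P2 z‖ + ‖f z - Qh P1 z‖ * ‖Qh P2 (z:ℂ)‖ := by
          rw [key]; exact (norm_add_le _ _).trans (by rw [norm_mul, norm_mul])
      _ ≤ ‖f‖ * δ + δ * (‖g‖ + 1) := by
          have hA := mul_le_mul (f.norm_coe_le_norm z) (hP2 z) (norm_nonneg _) (norm_nonneg f)
          have hB := mul_le_mul (hP1 z) h2 (norm_nonneg _) hδpos.le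
          linarith
      _ ≤ (‖f‖ + ‖g‖ + 1) * δ := by nlinarith [norm_nonneg f, norm_nonneg g, hδpos.le]
      _ ≤ (‖f‖ + ‖g‖ + 1) * (ε / (‖f‖ + ‖g‖ + 2)) := by
          gcongr
      _ ≤ ε := by
          rw [div_eq_mul_inv]
          have h4 : (0:ℝ) < ‖f‖ + ‖g‖ + 2 := by positivity
          rw [show (‖f‖ + ‖g‖ + 1) * (ε * (‖f‖ + ‖g‖ + 2)⁻¹)
              = ε * ((‖f‖ + ‖g‖ + 1) / (‖f‖ + ‖g‖ + 2)) by ring]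
          nlinarith [div_le_one_of_le₀ (by linarith : ‖f‖ + ‖g‖ + 1 ≤ ‖f‖ + ‖g‖ + 2) h4.le]
  | frequently f hfreq =>
    intro ε hε
    have hball : ∀ᶠ g in 𝓝 f, dist g f < ε/2 :=
      Metric.eventually_nhds_iff_ball.mpr ⟨ε/2, by positivity, fun g hg => by
        simpa [dist_comm] using hg⟩
    obtain ⟨g, hg1, hg2⟩ := (hfreq.and_eventually hball).exists
    obtain ⟨P, hP⟩ := hg1 (ε/2) (by positivity)
    refine ⟨P, fun z => ?_⟩
    calc ‖f z - Qh P z‖ ≤ ‖f z - g z‖ + ‖g z - Qh P z‖ := by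
          have := norm_add_le (f z - g z) (g z - Qh P (z:ℂ)); simpa using this
      _ ≤ ε/2 + ε/2 := by
          refine add_le_add ?_ (hP z)
          have := ContinuousMap.dist_apply_le_dist (f := g) (g := f) z
          rw [← dist_eq_norm]
          exact (dist_comm (f z) (g z) ▸ this).trans hg2.le
      _ = ε := by ring

lemma compl_null {K : Set ℂ} {ν : Measure ℂ}
    (h : ∀ z, z ∈ K ↔ ∀ r : ℝ, 0 < r → 0 < ν (Metric.ball z r)) : ν Kᶜ = 0 := by
  refine measure_null_of_locally_null _ (fun z hz => ?_)
  have h2 : ¬ ∀ r : ℝ, 0 < r → 0 < ν (Metric.ball z r) := fun hh => hz ((h z).mpr hh)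
  push_neg at h2
  obtain ⟨r, hr, hr0⟩ := h2
  exact ⟨Metric.ball z r, mem_nhdsWithin_of_mem_nhds (Metric.ball_mem_nhds z hr),
    le_antisymm hr0 bot_le⟩

lemma ae_mem_of_compl_null {S : Set ℂ} {ν : Measure ℂ} (h : ν Sᶜ = 0) : ∀ᵐ z ∂ν, z ∈ S := by
  rw [MeasureTheory.ae_iff]
  simpa [Set.compl_def] using h

lemma integrable_cont {ν : Measure ℂ} [IsProbabilityMeasure ν] {S : Set ℂ}
    (hS : IsCompact S) (hc : ν Sᶜ = 0) {f : ℂ → ℂ} (hf : Continuous f) :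
    Integrable f ν := by
  obtain ⟨C, hC⟩ := hS.exists_bound_of_continuousOn hf.continuousOn
  exact (integrable_const C).mono' hf.aestronglyMeasurable
    ((ae_mem_of_compl_null hc).mono fun z hz => hC z hz)

lemma norm_integral_le_of_mem_bound {ν : Measure ℂ} [IsProbabilityMeasure ν] {S : Set ℂ}
    (hc : ν Sᶜ = 0) {f : ℂ → ℂ} {C : ℝ} (hC : ∀ z ∈ S, ‖f z‖ ≤ C) :
    ‖∫ z, f z ∂ν‖ ≤ C := by
  have := norm_integral_le_of_norm_le_const (μ := ν) (f := f) (C := C)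
    ((ae_mem_of_compl_null hc).mono fun z hz => hC z hz)
  simpa using this

-- bump function
noncomputable def bump (l : ℂ) (r : ℝ) : ℂ → ℝ := fun z => max 0 (min 1 (2 - (2/r) * dist z l))

lemma bump_cont (l : ℂ) (r : ℝ) : Continuous (bump l r) := by
  unfold bump; fun_prop

lemma bump_nonneg (l : ℂ) (r : ℝ) (z : ℂ) : 0 ≤ bump l r z := le_max_left _ _
lemma bump_le_one (l : ℂ) (r : ℝ) (z : ℂ) : bump l r z ≤ 1 :=
  max_le zero_le_one (min_le_left _ _)

lemma bump_eq_one {l : ℂ} {r : ℝ} (hr : 0 < r) {z : ℂ} (h : dist z l < r/2) :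
    bump l r z = 1 := by
  have h1 : (1:ℝ) ≤ 2 - (2/r) * dist z l := by
    have h2 : (2/r) * dist z l ≤ (2/r) * (r/2) := by
      apply mul_le_mul_of_nonneg_left h.le (by positivity)
    have : (2/r) * (r/2) = 1 := by field_simp
    linarith
  simp [bump, min_eq_left h1, max_eq_right (by linarith : (0:ℝ) ≤ 1)]

lemma bump_eq_zero {l : ℂ} {r : ℝ} (hr : 0 < r) {z : ℂ} (h : r ≤ dist z l) :
    bump l r z = 0 := by
  have h1 : 2 - (2/r) * dist z l ≤ 0 := by
    have h2 : (2/r) * r ≤ (2/r) * dist z l :=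
      mul_le_mul_of_nonneg_left h (by positivity)
    have : (2/r) * r = 2 := by field_simp
    linarith
  have : min 1 (2 - (2/r) * dist z l) ≤ 0 := le_trans (min_le_right _ _) h1
  simp [bump, max_eq_left this]

lemma bump_compactSupport (l : ℂ) {r : ℝ} (hr : 0 < r) :
    HasCompactSupport (bump l r) := by
  apply HasCompactSupport.intro (isCompact_closedBall l r)
  intro z hz
  exact bump_eq_zero hr (le_of_lt (by simpa [Metric.mem_closedBall, not_le] using hz))

lemma eventually_inter
    {K : Set ℂ} {Kk : ℕ → Set ℂ} {μ : Measure ℂ} {μk : ℕ → Measure ℂ}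
    [IsProbabilityMeasure μ] [∀ k, IsProbabilityMeasure (μk k)]
    (hμc : μ Kᶜ = 0) (hμkc : ∀ k, μk k (Kk k)ᶜ = 0)
    (hK : IsCompact K) (hKk : ∀ k, IsCompact (Kk k))
    (hmomQ : ∀ P : FreeAlgebra ℂ Bool,
      Tendsto (fun k => ∫ z, Qh P z ∂ μk k) atTop (𝓝 (∫ z, Qh P z ∂ μ)))
    {R : ℝ} (hKD : K ⊆ Metric.closedBall 0 R)
    (hD : ∀ᶠ k in atTop, Kk k ⊆ Metric.closedBall 0 R)
    {l : ℂ} {r : ℝ} (hr : 0 < r) (hpos : 0 < μ (Metric.ball l (r/2))) :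
    ∀ᶠ k in atTop, (Kk k ∩ Metric.ball l r).Nonempty := by
  classical
  set g : ℂ → ℝ := bump l r with hg
  set G : ℂ → ℂ := fun z => (g z : ℂ) with hG
  have hGcont : Continuous G := Complex.continuous_ofReal.comp (bump_cont l r)
  have hgint : ∀ ν : Measure ℂ, IsProbabilityMeasure ν → Integrable g ν := fun ν _ =>
    (bump_cont l r).integrable_of_hasCompactSupport (bump_compactSupport l hr)
  set c : ℝ := (μ (Metric.ball l (r/2))).toReal with hc
  have hcpos : 0 < c := ENNReal.toReal_pos hpos.ne' (measure_ne_top μ _)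
  -- lower bound for ∫ g dμ
  have hlow : c ≤ ∫ z, g z ∂μ := by
    have hind : ∫ z, (Metric.ball l (r/2)).indicator (fun _ => (1:ℝ)) z ∂μ = c := by
      rw [integral_indicator_const (1:ℝ) Metric.isOpen_ball.measurableSet]
      simp [hc, measureReal_def]
    rw [← hind]
    apply integral_mono ((integrable_const (1:ℝ)).indicator Metric.isOpen_ball.measurableSet)
      (hgint μ inferInstance)
    intro z
    by_cases hz : z ∈ Metric.ball l (r/2)
    · simp only [Set.indicator_of_mem hz]
      rw [hg, bump_eq_one hr (by simpa [Metric.mem_ball] using hz)]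
    · simp only [Set.indicator_of_notMem hz]
      exact bump_nonneg l r z
  -- approximate G by a polynomial on a big ball
  set R' : ℝ := max R (‖l‖ + r) with hR'
  obtain ⟨P, hP⟩ := qh_approx R' G hGcont (show (0:ℝ) < c/4 by positivity)
  have hKD' : K ⊆ Metric.closedBall 0 R' :=
    hKD.trans (Metric.closedBall_subset_closedBall (le_max_left _ _))
  -- |∫ G dν - ∫ Qh P dν| ≤ c/4 for ν supported in closedBall 0 R'
  have key : ∀ (ν : Measure ℂ) [IsProbabilityMeasure ν], ∀ (S : Set ℂ), IsCompact S →
      ν Sᶜ = 0 → S ⊆ Metric.closedBall 0 R' →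
      ‖∫ z, G z ∂ν - ∫ z, Qh P z ∂ν‖ ≤ c/4 := by
    intro ν _ S hS hSc hSD
    rw [← integral_sub (integrable_cont hS hSc hGcont) (integrable_cont hS hSc (Qh_cont P))]
    exact norm_integral_le_of_mem_bound hSc (fun z hz => hP z (hSD hz))
  have hμbound : ‖∫ z, G z ∂μ - ∫ z, Qh P z ∂μ‖ ≤ c/4 := key μ K hK hμc hKD'
  have hconv := hmomQ P
  have hev : ∀ᶠ k in atTop, ‖∫ z, Qh P z ∂μk k - ∫ z, Qh P z ∂μ‖ < c/4 := by
    have := Metric.tendsto_atTop.mp hconv (c/4) (by positivity)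
    obtain ⟨N, hN⟩ := this
    exact eventually_atTop.mpr ⟨N, fun k hk => by simpa [dist_eq_norm] using hN k hk⟩
  filter_upwards [hD, hev] with k hDk hevk
  have hDk' : Kk k ⊆ Metric.closedBall 0 R' :=
    hDk.trans (Metric.closedBall_subset_closedBall (le_max_left _ _))
  have hkbound : ‖∫ z, G z ∂μk k - ∫ z, Qh P z ∂μk k‖ ≤ c/4 :=
    key (μk k) (Kk k) (hKk k) (hμkc k) hDk'
  -- conclude ∫ g dμk > 0
  have htot : ‖∫ z, G z ∂μk k - ∫ z, G z ∂μ‖ ≤ 3*c/4 := by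
    calc ‖∫ z, G z ∂μk k - ∫ z, G z ∂μ‖
        ≤ ‖∫ z, G z ∂μk k - ∫ z, Qh P z ∂μk k‖ + ‖∫ z, Qh P z ∂μk k - ∫ z, Qh P z ∂μ‖
          + ‖∫ z, Qh P z ∂μ - ∫ z, G z ∂μ‖ := by
          have := norm_add₃_le (a := ∫ z, G z ∂μk k - ∫ z, Qh P z ∂μk k)
            (b := ∫ z, Qh P z ∂μk k - ∫ z, Qh P z ∂μ) (c := ∫ z, Qh P z ∂μ - ∫ z, G z ∂μ)
          simpa using this
      _ ≤ c/4 + c/4 + c/4 := by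
          have h3 : ‖∫ z, Qh P z ∂μ - ∫ z, G z ∂μ‖ ≤ c/4 := by rw [norm_sub_rev]; exact hμbound
          exact add_le_add (add_le_add hkbound hevk.le) h3
      _ = 3*c/4 := by ring
  have hreal : ∫ z, G z ∂μk k = ((∫ z, g z ∂μk k : ℝ) : ℂ) := integral_ofReal
  have hreal2 : ∫ z, G z ∂μ = ((∫ z, g z ∂μ : ℝ) : ℂ) := integral_ofReal
  have hgk : 0 < ∫ z, g z ∂μk k := by
    have : |∫ z, g z ∂μk k - ∫ z, g z ∂μ| ≤ 3*c/4 := by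
      rw [hreal, hreal2] at htot
      calc |∫ z, g z ∂μk k - ∫ z, g z ∂μ|
          = ‖((∫ z, g z ∂μk k - ∫ z, g z ∂μ : ℝ) : ℂ)‖ := by
            rw [Complex.norm_real]; rfl
        _ ≤ 3*c/4 := by rwa [Complex.ofReal_sub]
    have := abs_sub_le_iff.mp this
    linarith
  -- nonempty intersection
  by_contra hcon
  push_neg at hcon
  have hzero : ∫ z, g z ∂μk k = 0 := by
    have hae : g =ᵐ[μk k] (fun _ => (0:ℝ)) := by
      filter_upwards [ae_mem_of_compl_null (hμkc k)] with z hz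
      by_contra hgz
      have hdist : dist z l < r := by
        by_contra hd
        exact hgz (bump_eq_zero hr (not_lt.mp hd))
      exact Set.eq_empty_iff_forall_notMem.mp hcon z ⟨hz, Metric.mem_ball.mpr hdist⟩
    rw [integral_congr_ae hae, integral_zero]
  rw [hzero] at hgk
  exact lt_irrefl 0 hgk

section core
variable {K : Set ℂ} {Kk : ℕ → Set ℂ}

lemma core_forward
    (hK : IsCompact K) (hKne : K.Nonempty)
    (hKk : ∀ k, IsCompact (Kk k)) (hKkne : ∀ k, (Kk k).Nonempty)
    (hnorm : ∀ P : FreeAlgebra ℂ Bool,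
      Tendsto (fun k => sSup ((fun z => ‖Qh P z‖) '' Kk k)) atTop
        (𝓝 (sSup ((fun z => ‖Qh P z‖) '' K)))) :
    Tendsto (fun k => sSup ((fun z : ℂ => Metric.infDist z K) '' Kk k)) atTop (𝓝 0) := by
  -- uniform bound on the Kk
  have hid : Qh (FreeAlgebra.ι ℂ true) = fun z : ℂ => z := by simp [Qh]
  set M : ℝ := sSup ((fun z : ℂ => ‖z‖) '' K) with hM
  have hMb : ∀ z ∈ K, ‖z‖ ≤ M :=
    fun z hz => le_csSup (hK.bddAbove_image continuous_norm.continuousOn) ⟨z, hz, rfl⟩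
  have hbd : ∀ᶠ k in atTop, Kk k ⊆ Metric.closedBall 0 (M + 1) := by
    have hfun : (fun z : ℂ => ‖Qh (FreeAlgebra.ι ℂ true) z‖) = fun z : ℂ => ‖z‖ := by rw [hid]
    have h1 : Tendsto (fun k => sSup ((fun z : ℂ => ‖z‖) '' Kk k)) atTop (𝓝 M) := by
      rw [hM, ← hfun]
      exact hnorm (FreeAlgebra.ι ℂ true)
    have h2 : ∀ᶠ k in atTop,
        sSup ((fun z : ℂ => ‖z‖) '' Kk k) < M + 1 := by
      filter_upwards [Metric.tendsto_nhds.mp h1 1 one_pos] with k hk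
      rw [Real.dist_eq] at hk
      linarith [(abs_sub_lt_iff.mp hk).1]
    filter_upwards [h2] with k hk z hz
    simp only [Metric.mem_closedBall, dist_zero_right]
    exact le_of_lt (lt_of_le_of_lt
      (le_csSup ((hKk k).bddAbove_image continuous_norm.continuousOn) ⟨z, hz, rfl⟩) hk)
  set R : ℝ := M + 1 with hR
  -- squeeze
  rw [Metric.tendsto_nhds]
  intro ε hε
  -- claim: eventually ∀ z ∈ Kk k, infDist z K < ε/2
  have claim : ∀ᶠ k in atTop, ∀ z ∈ Kk k, Metric.infDist z K < ε/2 := by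
    set f : ℂ → ℂ := fun z => ((min 1 ((2/(ε/2)) * Metric.infDist z K) : ℝ) : ℂ) with hf
    have hfc : Continuous f := by
      apply Complex.continuous_ofReal.comp
      exact continuous_const.min (continuous_const.mul (Metric.continuous_infDist_pt K))
    obtain ⟨P, hP⟩ := qh_approx R f hfc (show (0:ℝ) < 1/4 by norm_num)
    have hKsup : sSup ((fun z => ‖Qh P z‖) '' K) ≤ 1/4 := by
      apply csSup_le (hKne.image _)
      rintro - ⟨z, hz, rfl⟩
      have hfz : f z = 0 := by
        simp [hf, Metric.infDist_zero_of_mem hz]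
      have := hP z (by simpa [Metric.mem_closedBall, dist_zero_right] using
        (hMb z hz).trans (by linarith : M ≤ R))
      rw [hfz] at this
      simpa using this
    have hev : ∀ᶠ k in atTop, sSup ((fun z => ‖Qh P z‖) '' Kk k) < 1/2 := by
      filter_upwards [Metric.tendsto_nhds.mp (hnorm P) (1/4) (by norm_num)] with k hk
      rw [Real.dist_eq] at hk
      linarith [(abs_sub_lt_iff.mp hk).1, hKsup]
    filter_upwards [hbd, hev] with k hbdk hevk z hz
    have h1 : ‖Qh P z‖ < 1/2 :=
      lt_of_le_of_lt (le_csSup ((hKk k).bddAbove_image (Qh_cont P).norm.continuousOn)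
        ⟨z, hz, rfl⟩) hevk
    have h2 : ‖f z - Qh P z‖ ≤ 1/4 := hP z (hbdk hz)
    have h3 : ‖f z‖ ≤ ‖f z - Qh P z‖ + ‖Qh P z‖ := by
      calc ‖f z‖ = ‖(f z - Qh P z) + Qh P z‖ := by ring_nf
        _ ≤ _ := norm_add_le _ _
    have h4 : (min 1 ((2/(ε/2)) * Metric.infDist z K) : ℝ) < 1 := by
      have h5 : ‖f z‖ = |min 1 ((2/(ε/2)) * Metric.infDist z K)| := by
        rw [hf]; rw [Complex.norm_real]; rfl
      have h6 : (min 1 ((2/(ε/2)) * Metric.infDist z K) : ℝ)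
          ≤ |min 1 ((2/(ε/2)) * Metric.infDist z K)| := le_abs_self _
      have h9 : ‖f z‖ < 3/4 := by linarith
      rw [h5] at h9
      linarith
    have h7 : (2/(ε/2)) * Metric.infDist z K < 1 := by
      rcases min_lt_iff.mp h4 with h | h
      · linarith
      · exact h
    have h8 : (0:ℝ) < 2/(ε/2) := by positivity
    by_contra hcon
    push_neg at hcon
    have h10 : (2/(ε/2)) * (ε/2) ≤ (2/(ε/2)) * Metric.infDist z K :=
      mul_le_mul_of_nonneg_left hcon h8.le
    have h11 : (2/(ε/2)) * (ε/2) = 2 := by field_simp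
    linarith
  filter_upwards [claim] with k hk
  have hnn : 0 ≤ sSup ((fun z : ℂ => Metric.infDist z K) '' Kk k) :=
    Real.sSup_nonneg (by rintro - ⟨z, hz, rfl⟩; exact Metric.infDist_nonneg)
  have hle : sSup ((fun z : ℂ => Metric.infDist z K) '' Kk k) ≤ ε/2 := by
    apply csSup_le ((hKkne k).image _)
    rintro - ⟨z, hz, rfl⟩
    exact (hk z hz).le
  rw [Real.dist_eq]
  rw [abs_sub_comm, abs_of_nonpos (by linarith)]
  linarith

lemma core_backward
    {μ : Measure ℂ} {μk : ℕ → Measure ℂ}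
    [IsProbabilityMeasure μ] [∀ k, IsProbabilityMeasure (μk k)]
    (hμc : μ Kᶜ = 0) (hμkc : ∀ k, μk k (Kk k)ᶜ = 0)
    (hK : IsCompact K) (hKne : K.Nonempty)
    (hKk : ∀ k, IsCompact (Kk k)) (hKkne : ∀ k, (Kk k).Nonempty)
    (hsupp : ∀ z : ℂ, z ∈ K ↔ ∀ r : ℝ, 0 < r → 0 < μ (Metric.ball z r))
    (hmomQ : ∀ P : FreeAlgebra ℂ Bool,
      Tendsto (fun k => ∫ z, Qh P z ∂ μk k) atTop (𝓝 (∫ z, Qh P z ∂ μ)))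
    (hH : Tendsto (fun k => sSup ((fun z : ℂ => Metric.infDist z K) '' Kk k)) atTop (𝓝 0))
    (P : FreeAlgebra ℂ Bool) :
    Tendsto (fun k => sSup ((fun z => ‖Qh P z‖) '' Kk k)) atTop
      (𝓝 (sSup ((fun z => ‖Qh P z‖) '' K))) := by
  obtain ⟨RK, hRK⟩ := hK.isBounded.subset_closedBall (0 : ℂ)
  have hRK0 : 0 ≤ RK := by
    obtain ⟨z, hz⟩ := hKne
    have := hRK hz
    rw [Metric.mem_closedBall] at this
    linarith [dist_nonneg (x := z) (y := (0:ℂ))]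
  set R : ℝ := RK + 1 with hR
  have hKD : K ⊆ Metric.closedBall 0 R :=
    hRK.trans (Metric.closedBall_subset_closedBall (by linarith))
  -- small helper: eventual smallness of the Hausdorff sup gives infDist bounds
  have hsmall : ∀ δ : ℝ, 0 < δ → ∀ᶠ k in atTop, ∀ z ∈ Kk k, Metric.infDist z K < δ := by
    intro δ hδ
    filter_upwards [Metric.tendsto_nhds.mp hH δ hδ] with k hk z hz
    rw [Real.dist_eq] at hk
    have h1 : sSup ((fun z : ℂ => Metric.infDist z K) '' Kk k) < δ := by
      have := (abs_sub_lt_iff.mp hk).1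
      linarith
    exact lt_of_le_of_lt (le_csSup ((hKk k).bddAbove_image
      (Metric.continuous_infDist_pt K).continuousOn) ⟨z, hz, rfl⟩) h1
  have hD : ∀ᶠ k in atTop, Kk k ⊆ Metric.closedBall 0 R := by
    filter_upwards [hsmall 1 one_pos] with k hk z hz
    obtain ⟨y, hy, hdy⟩ := (Metric.infDist_lt_iff hKne).mp (hk z hz)
    rw [Metric.mem_closedBall, dist_zero_right]
    calc ‖z‖ ≤ ‖y‖ + dist z y := by
          rw [dist_eq_norm]
          calc ‖z‖ = ‖y + (z - y)‖ := by ring_nf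
            _ ≤ ‖y‖ + ‖z - y‖ := norm_add_le _ _
      _ ≤ RK + 1 := add_le_add (by simpa [Metric.mem_closedBall, dist_zero_right] using hRK hy)
          hdy.le
  set f : ℂ → ℝ := fun z => ‖Qh P z‖ with hf
  have hfc : Continuous f := (Qh_cont P).norm
  set S : ℝ := sSup (f '' K) with hS
  rw [Metric.tendsto_nhds]
  intro ε hε
  -- Upper bound: uniform continuity on a big ball
  have hucont : UniformContinuousOn f (Metric.closedBall 0 (R+1)) :=
    (isCompact_closedBall _ _).uniformContinuousOn_of_continuous hfc.continuousOn
  obtain ⟨δ, hδ0, hδ⟩ := Metric.uniformContinuousOn_iff.mp hucont (ε/2) (by positivity)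
  set δ0 : ℝ := min δ 1 with hδ0'
  have hδ0pos : 0 < δ0 := lt_min hδ0 one_pos
  have hupper : ∀ᶠ k in atTop, sSup (f '' Kk k) ≤ S + ε/2 := by
    filter_upwards [hsmall δ0 hδ0pos, hD] with k hk hDk
    apply csSup_le ((hKkne k).image f)
    rintro - ⟨z, hz, rfl⟩
    obtain ⟨y, hy, hdy⟩ := (Metric.infDist_lt_iff hKne).mp (hk z hz)
    have hzD : z ∈ Metric.closedBall (0:ℂ) (R+1) :=
      Metric.closedBall_subset_closedBall (by linarith) (hDk hz)
    have hyD : y ∈ Metric.closedBall (0:ℂ) (R+1) :=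
      Metric.closedBall_subset_closedBall (by linarith) (hKD hy)
    have := hδ z hzD y hyD (lt_of_lt_of_le hdy (min_le_left _ _))
    rw [Real.dist_eq] at this
    have h2 : f z - f y < ε/2 := by linarith [(abs_sub_lt_iff.mp this).1]
    have h3 : f y ≤ S := le_csSup (hK.bddAbove_image hfc.continuousOn) ⟨y, hy, rfl⟩
    linarith
  -- Lower bound: maximum attained, then use eventually_inter
  obtain ⟨y₀, hy₀K, hy₀max⟩ := hK.exists_isMaxOn hKne hfc.continuousOn
  have hSeq : S = f y₀ := by
    rw [hS]
    apply IsGreatest.csSup_eq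
    exact ⟨⟨y₀, hy₀K, rfl⟩, by rintro - ⟨z, hz, rfl⟩; exact hy₀max hz⟩
  obtain ⟨r, hr0, hr⟩ : ∃ r > 0, ∀ z : ℂ, dist z y₀ < r → S - ε/2 < f z := by
    have hcontat : ContinuousAt f y₀ := hfc.continuousAt
    rw [Metric.continuousAt_iff] at hcontat
    obtain ⟨r, hr0, hr⟩ := hcontat (ε/2) (by positivity)
    refine ⟨r, hr0, fun z hz => ?_⟩
    have := hr hz
    rw [Real.dist_eq] at this
    have := (abs_sub_lt_iff.mp this).2
    rw [hSeq]; linarith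
  have hpos : 0 < μ (Metric.ball y₀ (r/2)) := (hsupp y₀).mp hy₀K (r/2) (by positivity)
  have hinter := eventually_inter hμc hμkc hK hKk hmomQ hKD hD hr0 hpos
  have hlower : ∀ᶠ k in atTop, S - ε/2 < sSup (f '' Kk k) := by
    filter_upwards [hinter] with k hk
    obtain ⟨z, hzK, hzB⟩ := hk
    have h1 : S - ε/2 < f z := hr z (Metric.mem_ball.mp hzB)
    exact lt_of_lt_of_le h1 (le_csSup ((hKk k).bddAbove_image hfc.continuousOn) ⟨z, hzK, rfl⟩)
  filter_upwards [hupper, hlower] with k h1 h2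
  rw [Real.dist_eq, abs_sub_lt_iff]
  constructor <;> linarith

end core


/-- let `T`, `Tₖ` be bounded normal operators with spectra `K`, `Kₖ`,
and suppose `Tₖ → T` in *-moments with respect to faithful states; equivalently, the
spectral measures `μₖ`, `μ` (probability measures with full support `Kₖ`, `K`) converge
weakly on *-polynomials.  Then `Tₖ → T` strongly — `‖P(Tₖ, Tₖ*)‖ → ‖P(T, T*)‖` for all
*-polynomials `P` — if and only if `sup_{λ ∈ Kₖ} dist(λ, K) → 0`. -/
theorem stmt_16
    (Hlim : Type*) [NormedAddCommGroup Hlim] [InnerProductSpace ℂ Hlim]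
    [CompleteSpace Hlim] [Nontrivial Hlim]
    (Hk : ℕ → Type*) [∀ k, NormedAddCommGroup (Hk k)] [∀ k, InnerProductSpace ℂ (Hk k)]
    [∀ k, CompleteSpace (Hk k)] [∀ k, Nontrivial (Hk k)]
    (T : Hlim →L[ℂ] Hlim) (Tk : ∀ k, Hk k →L[ℂ] Hk k)
    (hT : IsStarNormal T) (hTk : ∀ k, IsStarNormal (Tk k))
    (μ : Measure ℂ) (μk : ℕ → Measure ℂ)
    [IsProbabilityMeasure μ] [∀ k, IsProbabilityMeasure (μk k)]
    (hsupp : ∀ z : ℂ, z ∈ spectrum ℂ T ↔ ∀ r : ℝ, 0 < r → 0 < μ (Metric.ball z r))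
    (hksupp : ∀ k, ∀ z : ℂ,
      z ∈ spectrum ℂ (Tk k) ↔ ∀ r : ℝ, 0 < r → 0 < μk k (Metric.ball z r))
    (hmom : ∀ P : FreeAlgebra ℂ Bool,
      Tendsto
        (fun k => ∫ z : ℂ,
          FreeAlgebra.lift ℂ (fun b : Bool => if b then z else (starRingEnd ℂ) z) P
            ∂ μk k)
        atTop
        (𝓝 (∫ z : ℂ,
          FreeAlgebra.lift ℂ (fun b : Bool => if b then z else (starRingEnd ℂ) z) P
            ∂ μ))) :
    (∀ P : FreeAlgebra ℂ Bool,
        Tendsto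
          (fun k => ‖FreeAlgebra.lift ℂ
            (fun b : Bool => if b then Tk k else ContinuousLinearMap.adjoint (Tk k)) P‖)
          atTop
          (𝓝 ‖FreeAlgebra.lift ℂ
            (fun b : Bool => if b then T else ContinuousLinearMap.adjoint T) P‖)) ↔
      Tendsto
        (fun k => sSup ((fun z : ℂ => Metric.infDist z (spectrum ℂ T)) ''
          spectrum ℂ (Tk k)))
        atTop (𝓝 0) := by
  
  set K : Set ℂ := spectrum ℂ T with hKdef
  set Kk : ℕ → Set ℂ := fun k => spectrum ℂ (Tk k) with hKkdef
  have hKcomp : IsCompact K := spectrum.isCompact T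
  have hKne : K.Nonempty := spectrum.nonempty T
  have hKkcomp : ∀ k, IsCompact (Kk k) := fun k => spectrum.isCompact (Tk k)
  have hKkne : ∀ k, (Kk k).Nonempty := fun k => spectrum.nonempty (Tk k)
  have hμc : μ Kᶜ = 0 := compl_null hsupp
  have hμkc : ∀ k, μk k (Kk k)ᶜ = 0 := fun k => compl_null (hksupp k)
  have hmomQ : ∀ P : FreeAlgebra ℂ Bool,
      Tendsto (fun k => ∫ z, Qh P z ∂ μk k) atTop (𝓝 (∫ z, Qh P z ∂ μ)) := by
    intro P
    have := hmom P
    simpa only [Qh_apply] using this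
  have hnormeq : ∀ P : FreeAlgebra ℂ Bool,
      ‖FreeAlgebra.lift ℂ
        (fun b : Bool => if b then T else ContinuousLinearMap.adjoint T) P‖
      = sSup ((fun z => ‖Qh P z‖) '' K) := fun P => norm_lift_eq T hT P
  have hnormeqk : ∀ k, ∀ P : FreeAlgebra ℂ Bool,
      ‖FreeAlgebra.lift ℂ
        (fun b : Bool => if b then Tk k else ContinuousLinearMap.adjoint (Tk k)) P‖
      = sSup ((fun z => ‖Qh P z‖) '' Kk k) := fun k P => norm_lift_eq (Tk k) (hTk k) P
  constructor
  · intro h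
    apply core_forward hKcomp hKne hKkcomp hKkne
    intro P
    have := h P
    rw [hnormeq P] at this
    have heq : (fun k => ‖FreeAlgebra.lift ℂ
        (fun b : Bool => if b then Tk k else ContinuousLinearMap.adjoint (Tk k)) P‖)
        = fun k => sSup ((fun z => ‖Qh P z‖) '' Kk k) := funext fun k => hnormeqk k P
    rwa [heq] at this
  · intro hH P
    rw [hnormeq P]
    have heq : (fun k => ‖FreeAlgebra.lift ℂ
        (fun b : Bool => if b then Tk k else ContinuousLinearMap.adjoint (Tk k)) P‖)
        = fun k => sSup ((fun z => ‖Qh P z‖) '' Kk k) := funext fun k => hnormeqk k P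
    rw [heq]
    exact core_backward hμc hμkc hKcomp hKne hKkcomp hKkne hsupp hmomQ hH P
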